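/- For an odd positive integer N and an even integer n not divisible by 2N, (2/N) * ∑_{k=1}^{(N-1)/2} sin(2πnk/N) = −(1/N) * tan(πn/(2N)). -/

import Mathlib

open Finset

theorem sin_partial_sum_even_n (N : ℕ) (hN : Odd N) (hNpos : 0 < N) (n : ℤ)
    (hneven : Even n) (hn : ¬ ((2 * (N : ℤ)) ∣ n)) :
    (2 / (N : ℝ)) * ∑ k ∈ Finset.Icc 1 ((N - 1) / 2),
        Real.sin (2 * Real.pi * (n : ℝ) * (k : ℝ) / (N : ℝ))
      = -(1 / (N : ℝ)) * Real.tan (Real.pi * (n : ℝ) / (2 * (N : ℝ))) := by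
  obtain ⟨m, hm⟩ := hN
  have hNne : (N : ℝ) ≠ 0 := Nat.cast_ne_zero.mpr hNpos.ne'
  set s : ℝ := Real.pi * (n : ℝ) / (N : ℝ) with hs
  set x : ℝ := Real.pi * (n : ℝ) / (2 * (N : ℝ)) with hx
  have hsx : s = 2 * x := by rw [hs, hx]; ring
  -- sin s ≠ 0
  have hsin : Real.sin s ≠ 0 := by
    intro h
    rw [Real.sin_eq_zero_iff] at h
    obtain ⟨k, hk⟩ := h
    have hk' : (k : ℝ) * (N : ℝ) = (n : ℝ) := by
      have hπ := Real.pi_ne_zero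
      field_simp [hs] at hk
      have : Real.pi * ((k : ℝ) * (N : ℝ)) = Real.pi * (n : ℝ) := by
        rw [show Real.pi * ((k : ℝ) * (N : ℝ)) = ((k : ℝ) * Real.pi) * (N : ℝ) by ring, hk, hs]
        exact div_mul_cancel₀ _ hNne
      exact mul_left_cancel₀ hπ this
    have hdvd : (N : ℤ) ∣ n := ⟨k, by exact_mod_cast (by linarith [hk'] : (n : ℝ) = (N : ℝ) * (k : ℝ))⟩
    have h2 : (2 : ℤ) ∣ n := hneven.two_dvd
    have hcop : IsCoprime (2 : ℤ) ((N : ℕ) : ℤ) := by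
      rw [Int.isCoprime_iff_gcd_eq_one]
      have : Nat.Coprime 2 N := Nat.coprime_two_left.mpr ⟨m, hm⟩
      simpa [Int.gcd] using this
    exact hn (hcop.mul_dvd h2 hdvd)
  have hsinx : Real.sin x ≠ 0 := by
    intro h
    apply hsin
    rw [hsx, Real.sin_two_mul, h]
    ring
  have hcosx : Real.cos x ≠ 0 := by
    intro h
    apply hsin
    rw [hsx, Real.sin_two_mul, h]
    ring
  -- telescoping
  have hIdx : (N - 1) / 2 = m := by omega
  rw [hIdx]
  have key : ∀ M : ℕ, 2 * Real.sin s * ∑ k ∈ Finset.Icc 1 M,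
      Real.sin (2 * Real.pi * (n : ℝ) * (k : ℝ) / (N : ℝ))
      = Real.cos s - Real.cos ((2 * (M : ℝ) + 1) * s) := by
    intro M
    induction M with
    | zero => simp
    | succ p ih =>
      have hins : Finset.Icc 1 (p + 1) = insert (p + 1) (Finset.Icc 1 p) := by
        ext a; simp only [Finset.mem_Icc, Finset.mem_insert]; omega
      rw [hins, Finset.sum_insert (by simp)]
      have harg : 2 * Real.pi * (n : ℝ) * ((p + 1 : ℕ) : ℝ) / (N : ℝ)
          = (2 * (p : ℝ) + 2) * s := by rw [hs]; push_cast; field_simp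
      rw [harg]
      have h1 : 2 * Real.sin s * Real.sin ((2 * (p : ℝ) + 2) * s)
          = Real.cos ((2 * (p : ℝ) + 1) * s) - Real.cos ((2 * ((p : ℝ) + 1) + 1) * s) := by
        rw [Real.cos_sub_cos,
          show ((2 * (p : ℝ) + 1) * s + (2 * ((p : ℝ) + 1) + 1) * s) / 2
            = (2 * (p : ℝ) + 2) * s by ring,
          show ((2 * (p : ℝ) + 1) * s - (2 * ((p : ℝ) + 1) + 1) * s) / 2 = -s by ring,
          Real.sin_neg]
        ring
      push_cast
      linear_combination ih + h1
  have hend : Real.cos ((2 * (m : ℝ) + 1) * s) = 1 := by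
    have hNm : ((N : ℝ)) = 2 * (m : ℝ) + 1 := by push_cast [hm]; ring
    obtain ⟨t, ht⟩ := hneven
    have : (2 * (m : ℝ) + 1) * s = (t : ℝ) * (2 * Real.pi) := by
      rw [hs, ← hNm]
      field_simp
      push_cast [ht]
      ring
    rw [this, Real.cos_int_mul_two_pi]
  have key' := key m
  rw [hend] at key' 
  -- final computation
  rw [Real.tan_eq_sin_div_cos]
  have hdouble_s : Real.sin s = 2 * Real.sin x * Real.cos x := by
    rw [hsx, Real.sin_two_mul]
  have hdouble_c : Real.cos s = 1 - 2 * Real.sin x ^ 2 := by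
    rw [hsx, Real.cos_two_mul']
    linarith [Real.sin_sq_add_cos_sq x]
  rw [hdouble_s, hdouble_c] at key'
  have hS2 : (∑ k ∈ Finset.Icc 1 m, Real.sin (2 * Real.pi * (n : ℝ) * (k : ℝ) / (N : ℝ)))
      * (2 * Real.cos x) = -Real.sin x := by
    apply mul_left_cancel₀ (mul_ne_zero (two_ne_zero (α := ℝ)) hsinx)
    linear_combination key'
  have hfin : Real.sin x / Real.cos x
      = -((∑ k ∈ Finset.Icc 1 m, Real.sin (2 * Real.pi * (n : ℝ) * (k : ℝ) / (N : ℝ))) * 2) := by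
    rw [div_eq_iff hcosx]
    linear_combination hS2
  rw [hfin]
  ring
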